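/- Let m, n ∈ ℕ with m ≤ n/4. The number of elements of H_m = {x ∈ {-1,0,1}^n : ∑|x_i| = 2m} within Hamming distance m of a fixed x ∈ H_m is at most C(n,m)·3^m, and #H_m = C(n,2m)·2^{2m}. -/

import Mathlib

/-- The set `H_m = {x ∈ {-1,0,1}^n : ∑ |x_i| = 2m}`. -/
def Hm (n m : ℕ) : Set (Fin n → ℤ) :=
  {x | (∀ i, |x i| ≤ 1) ∧ ∑ i, |x i| = 2 * m}

open Finset

private lemma abs_le_one_iff' (a : ℤ) : |a| ≤ 1 ↔ a = -1 ∨ a = 0 ∨ a = 1 := by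
  rw [abs_le]; omega

theorem card_hamming_ball_and_card_Hm (m n : ℕ) (hm : 1 ≤ m) (hmn : 4 * m ≤ n)
    (x : Fin n → ℤ) (hx : x ∈ Hm n m) :
    ({y ∈ Hm n m | hammingDist x y ≤ m} : Set (Fin n → ℤ)).ncard ≤ n.choose m * 3 ^ m ∧
      (Hm n m).ncard = n.choose (2 * m) * 2 ^ (2 * m) := by
  constructor
  · -- ball bound
    set C : Finset (Fin n → ℤ) :=
      (Finset.univ.powersetCard m).biUnion
        (fun s => Fintype.piFinset (fun i => if i ∈ s then ({-1,0,1} : Finset ℤ) else {x i}))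
      with hC
    have hsub : ({y ∈ Hm n m | hammingDist x y ≤ m} : Set (Fin n → ℤ)) ⊆ ↑C := by
      rintro y ⟨hy, hd⟩
      have hD : #{i | x i ≠ y i} ≤ m := hd
      obtain ⟨s, hDs, -, hscard⟩ :=
        Finset.exists_subsuperset_card_eq (Finset.subset_univ {i | x i ≠ y i}) hD
          (by simpa using le_trans (by omega) hmn)
      simp only [hC, Finset.coe_biUnion, Set.mem_iUnion, Finset.mem_coe]
      refine ⟨s, by simpa [Finset.mem_powersetCard] using hscard, ?_⟩
      rw [Fintype.mem_piFinset]
      intro i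
      by_cases hi : i ∈ s
      · have := (abs_le_one_iff' (y i)).1 (hy.1 i)
        simp [hi]
        tauto
      · have : ¬ (x i ≠ y i) := fun h => hi (hDs (by simp [h]))
        simp [hi]
        omega
    calc ({y ∈ Hm n m | hammingDist x y ≤ m} : Set (Fin n → ℤ)).ncard
        ≤ (↑C : Set (Fin n → ℤ)).ncard := Set.ncard_le_ncard hsub C.finite_toSet
      _ = C.card := Set.ncard_coe_finset C
      _ ≤ ∑ s ∈ Finset.univ.powersetCard m,
            (Fintype.piFinset (fun i => if i ∈ s then ({-1,0,1} : Finset ℤ) else {x i})).card :=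
          Finset.card_biUnion_le
      _ ≤ n.choose m * 3 ^ m := by
          rw [Finset.sum_congr rfl (fun s hs => ?_), Finset.sum_const, smul_eq_mul,
            Finset.card_powersetCard, Finset.card_univ, Fintype.card_fin]
          rw [Fintype.card_piFinset]
          have hs' : s.card = m := (Finset.mem_powersetCard.1 hs).2
          calc ∏ i, (if i ∈ s then ({-1,0,1} : Finset ℤ) else {x i}).card
              = ∏ i, (if i ∈ s then 3 else 1) := by
                refine Finset.prod_congr rfl fun i _ => ?_
                by_cases hi : i ∈ s <;> simp [hi]
            _ = 3 ^ m := by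
                rw [Finset.prod_ite_mem, Finset.univ_inter, Finset.prod_const, hs']
  · -- cardinality of Hm
    have key : (Hm n m) =
        ↑((Finset.univ.powersetCard (2*m)).biUnion
          (fun s => Fintype.piFinset (fun i : Fin n => if i ∈ s then ({-1,1} : Finset ℤ) else ({0} : Finset ℤ)))) := by
      ext y
      simp only [Finset.coe_biUnion, Set.mem_iUnion, Finset.mem_coe, Fintype.mem_piFinset,
        Finset.mem_powersetCard, Hm, Set.mem_setOf_eq]
      constructor
      · rintro ⟨h1, h2⟩
        refine ⟨({i | y i ≠ 0} : Finset (Fin n)), ⟨Finset.subset_univ _, ?_⟩, ?_⟩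
        · have : ∑ i, |y i| = ∑ i ∈ ({i | y i ≠ 0} : Finset (Fin n)), |y i| := by
            rw [Finset.sum_filter_of_ne]
            intro i _ h
            intro h0
            simp [h0] at h
          rw [this] at h2
          have : ∑ i ∈ ({i | y i ≠ 0} : Finset (Fin n)), |y i|
              = ∑ i ∈ ({i | y i ≠ 0} : Finset (Fin n)), 1 := by
            refine Finset.sum_congr rfl fun i hi => ?_
            have := (abs_le_one_iff' (y i)).1 (h1 i)
            simp only [Finset.mem_filter] at hi
            rcases this with h | h | h <;> simp [h] at hi ⊢
          rw [this] at h2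
          simp only [Finset.sum_const, nsmul_eq_mul, mul_one] at h2
          exact_mod_cast h2
        · intro i
          by_cases hi : y i = 0 <;> have := (abs_le_one_iff' (y i)).1 (h1 i) <;>
            simp [hi, Finset.mem_filter] <;> tauto
      · rintro ⟨s, ⟨-, hcard⟩, hmem⟩
        have hval : ∀ i, |y i| = if i ∈ s then 1 else 0 := by
          intro i
          have := hmem i
          by_cases hi : i ∈ s
          · simp only [hi, if_true] at this ⊢
            simp only [Finset.mem_insert, Finset.mem_singleton] at this
            rcases this with h | h <;> simp [h]
          · simp only [hi, if_false] at this ⊢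
            simp only [Finset.mem_singleton] at this
            simp [this]
        constructor
        · intro i; rw [hval i]; split <;> norm_num
        · calc ∑ i, |y i| = ∑ i, (if i ∈ s then (1:ℤ) else 0) := by
                exact Finset.sum_congr rfl fun i _ => hval i
            _ = 2 * m := by
                rw [Finset.sum_ite_mem, Finset.univ_inter, Finset.sum_const, hcard]
                push_cast; ring
    rw [key, Set.ncard_coe_finset]
    rw [Finset.card_biUnion, Finset.sum_congr rfl (fun s hs => ?_), Finset.sum_const,
      smul_eq_mul, Finset.card_powersetCard, Finset.card_univ, Fintype.card_fin]
    · rw [Fintype.card_piFinset]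
      have hs' : s.card = 2*m := (Finset.mem_powersetCard.1 hs).2
      calc ∏ i, (if i ∈ s then ({-1,1} : Finset ℤ) else ({0} : Finset ℤ)).card
          = ∏ i, (if i ∈ s then 2 else 1) := by
            refine Finset.prod_congr rfl fun i _ => ?_
            by_cases hi : i ∈ s <;> simp [hi]
        _ = 2 ^ (2*m) := by
            rw [Finset.prod_ite_mem, Finset.univ_inter, Finset.prod_const, hs']
    · intro s hs t ht hst
      rw [Function.onFun, Finset.disjoint_left]
      intro y hys hyt
      rw [Fintype.mem_piFinset] at hys hyt
      apply hst
      ext i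
      constructor <;> intro hi
      · have h1 := hys i; have h2 := hyt i
        simp [hi] at h1
        by_contra hit
        simp [hit] at h2
        rcases h1 with h | h <;> simp [h] at h2
      · have h1 := hys i; have h2 := hyt i
        simp [hi] at h2
        by_contra hit
        simp [hit] at h1
        rcases h2 with h | h <;> simp [h] at h1
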